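/- Fix integers r ≥ 2 and 0 = n_0 ≤ n_1 ≤ … ≤ n_r = n, and a quiver (α, β) satisfying the complex moment map equations at level (λ_1,…,λ_{r−1}) ∈ ℂ^{r−1}. For 1 ≤ k ≤ r−1 define X_k = α_{r−1} α_{r−2} ⋯ α_{r−k} β_{r−k} ⋯ β_{r−2} β_{r−1} (an n×n complex matrix), set X = X_1, and set X_r = 0. Then for each 1 ≤ k ≤ r−1 one has X_k X = X_{k+1} − (λ_{r−1} + λ_{r−2} + ⋯ + λ_{r−k}) X_k; equivalently, X_k (X + ν_{r−k} I) = X_{k+1}, where ν_i = λ_i + λ_{i+1} + ⋯ + λ_{r−1}. -/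

import Mathlib

/-- (Here the paper's `r` is `m + 1`, so `r ≥ 2` is `1 ≤ m`;
the quiver maps are `α i : ℂ^(dims i) → ℂ^(dims (i+1))` and
`β i : ℂ^(dims (i+1)) → ℂ^(dims i)` for `i = 0, …, m`, with `dims 0 = 0` so
that `α 0 = β 0 = 0` automatically.  The complex moment map equations at level
`(λ_1, …, λ_m)` read `α_{i−1} β_{i−1} − β_i α_i = λ_i I` for `i = j+1`,
`j < m`.  The partial products `A i = α_m α_{m-1} ⋯ α_i` and
`B i = β_i ⋯ β_{m-1} β_m` are encoded by their defining recurrences, so that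
`X_k = A (m+1−k) * B (m+1−k)` for `1 ≤ k ≤ m`, `X = X_1 = A m * B m`, and
`X_r = A 0 * B 0 = 0` since `dims 0 = 0`.)

For each `1 ≤ k ≤ m` one has
`X_k X = X_{k+1} − (λ_m + λ_{m-1} + ⋯ + λ_{m+1−k}) X_k`. -/
theorem statement4 (m : ℕ) (hm : 1 ≤ m) (dims : ℕ → ℕ) (h0 : dims 0 = 0)
    (hmono : ∀ i ≤ m, dims i ≤ dims (i+1))
    (α : ∀ i : ℕ, Matrix (Fin (dims (i+1))) (Fin (dims i)) ℂ)
    (β : ∀ i : ℕ, Matrix (Fin (dims i)) (Fin (dims (i+1))) ℂ)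
    (lam : ℕ → ℂ)
    (hmm : ∀ j < m, α j * β j - β (j+1) * α (j+1) =
      lam (j+1) • (1 : Matrix (Fin (dims (j+1))) (Fin (dims (j+1))) ℂ))
    (A : ∀ i : ℕ, Matrix (Fin (dims (m+1))) (Fin (dims i)) ℂ)
    (B : ∀ i : ℕ, Matrix (Fin (dims i)) (Fin (dims (m+1))) ℂ)
    (hA1 : A (m+1) = 1) (hB1 : B (m+1) = 1)
    (hA : ∀ i ≤ m, A i = A (i+1) * α i)
    (hB : ∀ i ≤ m, B i = β i * B (i+1)) :
    ∀ k, 1 ≤ k → k ≤ m →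
      (A (m+1-k) * B (m+1-k)) * (A m * B m) =
        A (m-k) * B (m-k) -
          (∑ j ∈ Finset.Icc (m+1-k) m, lam j) • (A (m+1-k) * B (m+1-k)) := by
  -- β (j+1) * α (j+1) = α j * β j - lam (j+1) • 1
  have hba : ∀ j < m, β (j+1) * α (j+1) =
      α j * β j - lam (j+1) • (1 : Matrix (Fin (dims (j+1))) (Fin (dims (j+1))) ℂ) := by
    intro j hj
    have := hmm j hj
    linear_combination (norm := (noncomm_ring; try ring)) -this
  -- key downward induction
  have key : ∀ d i, i + 1 + d = m →
      B (i+1) * (A m * B m) =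
        α i * β i * B (i+1) - (∑ j ∈ Finset.Icc (i+1) m, lam j) • B (i+1) := by
    intro d
    induction d with
    | zero =>
      intro i hi
      have him : m = i + 1 := by omega
      subst him
      have hBi : B (i+1) = β (i+1) * B (i+2) := hB (i+1) le_rfl
      have hAi : A (i+1) = A (i+2) * α (i+1) := hA (i+1) le_rfl
      rw [hBi, hAi, hA1, hB1, Finset.Icc_self, Finset.sum_singleton]
      have h1 : β (i+1) * α (i+1) = α i * β i -
          lam (i+1) • (1 : Matrix (Fin (dims (i+1))) (Fin (dims (i+1))) ℂ) :=
        hba i (by omega)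
      simp only [Matrix.mul_one, Matrix.one_mul]
      rw [← Matrix.mul_assoc, h1, Matrix.sub_mul, Matrix.smul_mul, Matrix.one_mul]
    | succ d ih =>
      intro i hi
      have hi1 : i + 1 ≤ m := by omega
      have hih := ih (i+1) (by omega)
      have hBi : B (i+1) = β (i+1) * B (i+2) := hB (i+1) (by omega)
      have hsum : ∑ j ∈ Finset.Icc (i+1) m, lam j
          = lam (i+1) + ∑ j ∈ Finset.Icc (i+2) m, lam j := by
        rw [Finset.Icc_eq_cons_Ioc hi1, Finset.sum_cons, ← Finset.Icc_add_one_left_eq_Ioc]; rfl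
      have h1 : β (i+1) * α (i+1) = α i * β i -
          lam (i+1) • (1 : Matrix (Fin (dims (i+1))) (Fin (dims (i+1))) ℂ) :=
        hba i (by omega)
      rw [hBi, hsum]
      calc β (i+1) * B (i+2) * (A m * B m)
          = β (i+1) * (B (i+2) * (A m * B m)) := by rw [Matrix.mul_assoc]
        _ = β (i+1) * (α (i+1) * β (i+1) * B (i+2)
              - (∑ j ∈ Finset.Icc (i+2) m, lam j) • B (i+2)) := by rw [hih]
        _ = (β (i+1) * α (i+1)) * (β (i+1) * B (i+2))
              - (∑ j ∈ Finset.Icc (i+2) m, lam j) • (β (i+1) * B (i+2)) := by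
            rw [Matrix.mul_sub, Matrix.mul_smul]
            congr 1
            simp only [Matrix.mul_assoc]
        _ = (α i * β i - lam (i+1) • 1) * (β (i+1) * B (i+2))
              - (∑ j ∈ Finset.Icc (i+2) m, lam j) • (β (i+1) * B (i+2)) := by rw [h1]
        _ = α i * β i * (β (i+1) * B (i+2))
              - (lam (i+1) + ∑ j ∈ Finset.Icc (i+2) m, lam j) • (β (i+1) * B (i+2)) := by
            rw [Matrix.sub_mul, Matrix.smul_mul, Matrix.one_mul, add_smul]; abel
  intro k hk1 hkm
  have e1 : m + 1 - k = (m - k) + 1 := by omega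
  rw [e1]
  set i := m - k with hidef
  have hkey := key (k - 1) i (by omega)
  have him : i ≤ m := by omega
  have hAi : A i = A (i+1) * α i := hA i him
  have hBi : B i = β i * B (i+1) := hB i him
  calc A (i+1) * B (i+1) * (A m * B m)
      = A (i+1) * (B (i+1) * (A m * B m)) := by rw [Matrix.mul_assoc]
    _ = A (i+1) * (α i * β i * B (i+1)
          - (∑ j ∈ Finset.Icc (i+1) m, lam j) • B (i+1)) := by rw [hkey]
    _ = (A (i+1) * α i) * (β i * B (i+1))
          - (∑ j ∈ Finset.Icc (i+1) m, lam j) • (A (i+1) * B (i+1)) := by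
        rw [Matrix.mul_sub, Matrix.mul_smul]
        congr 1
        simp only [Matrix.mul_assoc]
    _ = A i * B i - (∑ j ∈ Finset.Icc (i+1) m, lam j) • (A (i+1) * B (i+1)) := by
        rw [hAi, hBi]
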